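/- Let R be a ring such that for every simple right R-module T, Ann(T) = Ann(E(T)), and such that R/P is a right V-ring for every right primitive ideal P. Then R is a right V-ring. -/

import Mathlib

open CategoryTheory

section Hull

variable {A Q : Type} [Ring A] [AddCommGroup Q] [Module A Q]

/-- `S` is an essential submodule of `E` (both submodules of `Q`). -/
def Ess (S E : Submodule A Q) : Prop :=
  S ≤ E ∧ ∀ x ∈ E, x ≠ (0 : Q) → ∃ a : A, a • x ∈ S ∧ a • x ≠ 0

lemma ess_self (S : Submodule A Q) : Ess S S :=
  ⟨le_refl S, fun x hx hx0 => ⟨1, by simpa using hx, by simpa using hx0⟩⟩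

lemma exists_maximal_ess (S : Submodule A Q) :
    ∃ E, Maximal (fun E => Ess S E) E := by
  have key : ∀ c ⊆ {E | Ess S E}, IsChain (· ≤ ·) c → ∀ y ∈ c,
      ∃ ub ∈ {E | Ess S E}, ∀ z ∈ c, z ≤ ub := by
    intro c hc hchain y hy
    refine ⟨sSup c, ⟨le_trans (hc hy).1 (le_sSup hy), ?_⟩, fun z hz => le_sSup hz⟩
    intro x hx hx0
    rw [Submodule.mem_sSup_of_directed ⟨y, hy⟩ hchain.directedOn] at hx
    obtain ⟨p, hp, hxp⟩ := hx
    exact (hc hp).2 x hxp hx0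
  obtain ⟨m, _, hm⟩ := zorn_le_nonempty₀ {E | Ess S E} key S (ess_self S)
  exact ⟨m, hm⟩

lemma injective_of_maximal_ess [inj : Module.Injective A Q] {S E : Submodule A Q}
    (hE : Maximal (fun E => Ess S E) E) : Module.Injective A ↥E := by
  -- a maximal complement C of E
  have key : ∀ c ⊆ {C : Submodule A Q | E ⊓ C = ⊥}, IsChain (· ≤ ·) c → ∀ y ∈ c,
      ∃ ub ∈ {C : Submodule A Q | E ⊓ C = ⊥}, ∀ z ∈ c, z ≤ ub := by
    intro c hc hchain y hy
    refine ⟨sSup c, ?_, fun z hz => le_sSup hz⟩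
    show E ⊓ sSup c = ⊥
    rw [Submodule.eq_bot_iff]
    intro x hx
    rw [Submodule.mem_inf] at hx
    obtain ⟨hxE, hxs⟩ := hx
    rw [Submodule.mem_sSup_of_directed ⟨y, hy⟩ hchain.directedOn] at hxs
    obtain ⟨p, hp, hxp⟩ := hxs
    have : x ∈ E ⊓ p := ⟨hxE, hxp⟩
    rw [hc hp] at this
    simpa using this
  obtain ⟨C, _, hC⟩ := zorn_le_nonempty₀ {C : Submodule A Q | E ⊓ C = ⊥} key ⊥ (by simp)
  have hEC : E ⊓ C = ⊥ := hC.1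
  set π : Q →ₗ[A] Q ⧸ C := C.mkQ with hπ
  set φ : ↥E →ₗ[A] Q ⧸ C := π ∘ₗ E.subtype with hφ
  have hφinj : Function.Injective φ := by
    intro x y hxy
    have : ((x : Q) - y) ∈ C := by
      rwa [← Submodule.Quotient.mk_eq_zero, Submodule.Quotient.mk_sub, sub_eq_zero]
    have hmem : ((x : Q) - y) ∈ E ⊓ C := ⟨E.sub_mem x.2 y.2, this⟩
    rw [hEC] at hmem
    exact Subtype.ext (by simpa [sub_eq_zero] using hmem)
  -- E is essential in Q ⧸ C
  have hess : ∀ y : Q ⧸ C, y ≠ 0 → ∃ a : A, a • y ∈ LinearMap.range φ ∧ a • y ≠ 0 := by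
    intro y hy
    obtain ⟨q, rfl⟩ := Submodule.Quotient.mk_surjective C y
    have hqC : q ∉ C := fun h => hy (by rwa [Submodule.Quotient.mk_eq_zero])
    have hK : ¬ (E ⊓ (C ⊔ Submodule.span A {q}) = ⊥) := by
      intro h
      have : C ⊔ Submodule.span A {q} ≤ C := hC.2 h le_sup_left
      exact hqC (this (le_sup_right (a := C) (Submodule.mem_span_singleton_self q)))
    obtain ⟨e, ⟨heE, heK⟩, he0⟩ := (Submodule.ne_bot_iff _).mp hK
    obtain ⟨c, hcC, s, hs, hecs⟩ := Submodule.mem_sup.mp heK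
    obtain ⟨a, rfl⟩ := Submodule.mem_span_singleton.mp hs
    have heC : e ∉ C := by
      intro h
      have : e ∈ E ⊓ C := ⟨heE, h⟩
      rw [hEC] at this
      exact he0 (by simpa using this)
    refine ⟨a, ⟨⟨⟨e, heE⟩, ?_⟩, ?_⟩⟩
    · show π e = a • Submodule.Quotient.mk q
      rw [← hecs, map_add]
      have : π c = 0 := by rwa [hπ, Submodule.mkQ_apply, Submodule.Quotient.mk_eq_zero]
      rw [this, zero_add]
      simp [hπ]
    · show a • (Submodule.Quotient.mk q : Q ⧸ C) ≠ 0
      have : π e = a • (Submodule.Quotient.mk q : Q ⧸ C) := by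
        rw [← hecs, map_add]
        have hc0 : π c = 0 := by rwa [hπ, Submodule.mkQ_apply, Submodule.Quotient.mk_eq_zero]
        rw [hc0, zero_add]; simp [hπ]
      rw [← this]
      simpa [hπ, Submodule.Quotient.mk_eq_zero] using heC
  -- extend the inverse of φ to g : Q ⧸ C → Q
  obtain ⟨g, hg⟩ := Module.Injective.out φ hφinj E.subtype
  have hginj : Function.Injective g := by
    rw [injective_iff_map_eq_zero]
    intro y hy
    by_contra hy0
    obtain ⟨a, ⟨⟨x, hx⟩, hne⟩⟩ := hess y hy0
    have : g (a • y) = (x : Q) := by rw [← hx, hg]; rfl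
    rw [map_smul, hy, smul_zero] at this
    have hx0 : x = 0 := Subtype.ext this.symm
    rw [hx0] at hx
    exact hne (by rw [← hx]; simp)
  -- range g = E
  have hErange : E ≤ LinearMap.range g := by
    intro e he
    exact ⟨φ ⟨e, he⟩, (hg ⟨e, he⟩).trans rfl⟩
  have hrange : LinearMap.range g = E := by
    refine le_antisymm ?_ hErange
    have : Ess S (LinearMap.range g) := by
      constructor
      · exact le_trans hE.1.1 hErange
      · rintro x ⟨y, rfl⟩ hx0
        have hy0 : y ≠ 0 := by rintro rfl; simp at hx0
        obtain ⟨a, ⟨⟨x₀, hx₀⟩, hne⟩⟩ := hess y hy0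
        have hgx : g (a • y) = (x₀ : Q) := by rw [← hx₀, hg]; rfl
        have hx₀0 : (x₀ : Q) ≠ 0 := by
          intro h
          have : x₀ = 0 := Subtype.ext h
          rw [this] at hx₀
          exact hne (by rw [← hx₀]; simp)
        obtain ⟨b, hbS, hb0⟩ := hE.1.2 (x₀ : Q) x₀.2 hx₀0
        refine ⟨b * a, ?_, ?_⟩
        · rw [mul_smul, ← map_smul, hgx]; exact hbS
        · rw [mul_smul, ← map_smul, hgx]; exact hb0
    exact hE.2 this hErange
  -- Q = E ⊕ C
  have hπg : ∀ y : Q ⧸ C, π (g y) = y := by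
    intro y
    have hgy : g y ∈ E := hrange ▸ ⟨y, rfl⟩
    have : g (φ ⟨g y, hgy⟩) = g y := by rw [hg]; rfl
    have := hginj this
    rwa [hφ] at this
  have hcompl : IsCompl E C := by
    constructor
    · rw [disjoint_iff]; exact hEC
    · rw [codisjoint_iff, eq_top_iff]
      intro q _
      have h1 : g (π q) ∈ E := hrange ▸ ⟨π q, rfl⟩
      have h2 : q - g (π q) ∈ C := by
        rw [← Submodule.Quotient.mk_eq_zero (p := C)]
        have : π (q - g (π q)) = 0 := by rw [map_sub, hπg, sub_self]
        simpa [hπ] using this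
      exact Submodule.mem_sup.mpr ⟨g (π q), h1, q - g (π q), h2, by abel⟩
  set p : Q →ₗ[A] ↥E := Submodule.linearProjOfIsCompl E C hcompl with hp
  constructor
  intro X Y _ _ _ _ f hf g0
  obtain ⟨h, hh⟩ := Module.Injective.out f hf (E.subtype ∘ₗ g0)
  refine ⟨p ∘ₗ h, fun x => ?_⟩
  have : h (f x) = ((g0 x : ↥E) : Q) := hh x
  simp only [LinearMap.comp_apply, this]
  exact Submodule.linearProjOfIsCompl_apply_left hcompl (g0 x)

end Hull

section QuotMod

variable {A : Type} [Ring A] (P : TwoSidedIdeal A) (M : Type) [AddCommGroup M] [Module A M]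

/-- The `SMul` of the quotient ring on a module annihilated by `P`. -/
def quotSMul (h : P.asIdeal ≤ Module.annihilator A M) : SMul P.ringCon.Quotient M where
  smul x m := Quotient.liftOn x (fun a => a • m) (by
    intro a b hab
    have hmem : a - b ∈ P.asIdeal := TwoSidedIdeal.mem_asIdeal.mpr ((P.rel_iff a b).mp hab)
    have := Module.mem_annihilator.mp (h hmem) m
    rw [sub_smul, sub_eq_zero] at this
    exact this)

/-- The module structure of the quotient ring on a module annihilated by `P`. -/
def quotModule (h : P.asIdeal ≤ Module.annihilator A M) : Module P.ringCon.Quotient M :=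
  letI := quotSMul P M h
  Function.Surjective.moduleLeft P.ringCon.mk'
    (fun x => Quotient.inductionOn x fun a => ⟨a, rfl⟩) (fun _ _ => rfl)

end QuotMod


lemma exists_embed_injective (A S : Type) [Ring A] [AddCommGroup S] [Module A S] :
    ∃ (Q : Type) (_ : AddCommGroup Q) (_ : Module A Q),
      Module.Injective A Q ∧ ∃ j : S →ₗ[A] Q, Function.Injective j := by
  refine ⟨↥(Injective.under (ModuleCat.of A S) : ModuleCat A), inferInstance, inferInstance, ?_, ?_⟩
  · haveI : Injective (ModuleCat.of A ↥(Injective.under (ModuleCat.of A S) : ModuleCat A)) :=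
      Injective.injective_under (ModuleCat.of A S)
    exact Module.injective_module_of_injective_object _ _
  · exact ⟨(Injective.ι (ModuleCat.of A S)).hom,
      (ModuleCat.mono_iff_injective (Injective.ι (ModuleCat.of A S))).mp (Injective.ι_mono _)⟩


/-- Every simple left `A`-module is injective. Applied to `A = Rᵐᵒᵖ` this says
that `R` is a right V-ring. -/
def LeftV (A : Type) [Ring A] : Prop :=
  ∀ (S : Type) [AddCommGroup S] [Module A S], IsSimpleModule A S → Module.Injective A S

/-- `i : T →ₗ[A] E` exhibits `E` as an injective hull of `T`. -/
def IsInjectiveHull (A : Type) [Ring A] {T E : Type} [AddCommGroup T] [Module A T]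
    [AddCommGroup E] [Module A E] (i : T →ₗ[A] E) : Prop :=
  Module.Injective A E ∧ Function.Injective i ∧
    ∀ K : Submodule A E, K ≠ ⊥ → LinearMap.range i ⊓ K ≠ ⊥

/-- If `Ann(T) = Ann(E(T))` for every simple right `R`-module `T` and `R/P` is a right V-ring
for every right primitive ideal `P`, then `R` is a right V-ring. -/
theorem stmt5 (R : Type) [Ring R]
    (hann : ∀ (T : Type) [AddCommGroup T] [Module Rᵐᵒᵖ T], IsSimpleModule Rᵐᵒᵖ T →
      ∀ (E : Type) [AddCommGroup E] [Module Rᵐᵒᵖ E] (i : T →ₗ[Rᵐᵒᵖ] E),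
        IsInjectiveHull Rᵐᵒᵖ i →
          Module.annihilator Rᵐᵒᵖ T = Module.annihilator Rᵐᵒᵖ E)
    (hquot : ∀ (T : Type) [AddCommGroup T] [Module Rᵐᵒᵖ T], IsSimpleModule Rᵐᵒᵖ T →
      ∀ P : TwoSidedIdeal Rᵐᵒᵖ, TwoSidedIdeal.asIdeal P = Module.annihilator Rᵐᵒᵖ T →
        LeftV P.ringCon.Quotient) :
    LeftV Rᵐᵒᵖ := by
  intro S _ _ hS
  obtain ⟨Q, _, _, hQinj, j, hjinj⟩ := exists_embed_injective Rᵐᵒᵖ S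
  obtain ⟨E, hE⟩ := exists_maximal_ess (LinearMap.range j)
  haveI hEinj : Module.Injective Rᵐᵒᵖ ↥E := injective_of_maximal_ess hE
  have hS₀E : LinearMap.range j ≤ E := hE.1.1
  let i : S →ₗ[Rᵐᵒᵖ] ↥E := j.codRestrict E (fun s => hS₀E ⟨s, rfl⟩)
  have hiinj : Function.Injective i := by
    intro s s' hss
    exact hjinj (congrArg Subtype.val hss)
  have hhull : IsInjectiveHull Rᵐᵒᵖ i := by
    refine ⟨hEinj, hiinj, ?_⟩
    intro K hK
    obtain ⟨x, hxK, hx0⟩ := (Submodule.ne_bot_iff K).mp hK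
    have hx0' : (x : Q) ≠ 0 := fun h => hx0 (Subtype.ext h)
    obtain ⟨a, haS, ha0⟩ := hE.1.2 (x : Q) x.2 hx0'
    obtain ⟨s, hs⟩ := haS
    rw [Submodule.ne_bot_iff]
    refine ⟨a • x, Submodule.mem_inf.mpr ⟨⟨s, ?_⟩, K.smul_mem a hxK⟩, ?_⟩
    · exact Subtype.ext (by simpa [i, LinearMap.codRestrict_apply] using hs)
    · exact fun h => ha0 (by simpa using congrArg Subtype.val h)
  have hannEq : Module.annihilator Rᵐᵒᵖ S = Module.annihilator Rᵐᵒᵖ ↥E :=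
    hann S hS ↥E i hhull
  let P : TwoSidedIdeal Rᵐᵒᵖ := TwoSidedIdeal.mk'
    (Module.annihilator Rᵐᵒᵖ S : Set Rᵐᵒᵖ)
    (by simp only [SetLike.mem_coe]; exact Submodule.zero_mem _)
    (fun ha hb => by simp only [SetLike.mem_coe] at *; exact Submodule.add_mem _ ha hb)
    (fun ha => by simp only [SetLike.mem_coe] at *; exact Submodule.neg_mem _ ha)
    (fun {x y} hy => by
      simp only [SetLike.mem_coe, Module.mem_annihilator] at *
      intro m; rw [mul_smul, hy m, smul_zero])
    (fun {x y} hx => by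
      simp only [SetLike.mem_coe, Module.mem_annihilator] at *
      intro m; rw [mul_smul, hx (y • m)])
  have hP : P.asIdeal = Module.annihilator Rᵐᵒᵖ S := by
    ext a
    rw [TwoSidedIdeal.mem_asIdeal, TwoSidedIdeal.mem_mk']
    rfl
  letI mS : Module P.ringCon.Quotient S := quotModule P S (le_of_eq hP)
  letI mE : Module P.ringCon.Quotient ↥E := quotModule P ↥E (le_of_eq (hP.trans hannEq))
  have hSsimp : IsSimpleModule P.ringCon.Quotient S := by
    haveI : Nontrivial S := IsSimpleModule.nontrivial Rᵐᵒᵖ S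
    haveI : Nontrivial (Submodule P.ringCon.Quotient S) :=
      (Submodule.nontrivial_iff P.ringCon.Quotient).mpr inferInstance
    rw [isSimpleModule_iff]; refine ⟨fun N => ?_⟩
    let NA : Submodule Rᵐᵒᵖ S :=
      { carrier := N
        add_mem' := fun h1 h2 => N.add_mem h1 h2
        zero_mem' := N.zero_mem
        smul_mem' := fun a m hm => N.smul_mem (P.ringCon.mk' a) hm }
    rcases hS.eq_bot_or_eq_top NA with h | h
    · left
      rw [Submodule.eq_bot_iff] at h ⊢
      exact fun x hx => h x hx
    · right
      rw [Submodule.eq_top_iff'] at h ⊢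
      exact fun x => h x
  have hSinjQ : Module.Injective P.ringCon.Quotient S := hquot S hS P hP S hSsimp
  let i' : S →ₗ[P.ringCon.Quotient] ↥E :=
    { toFun := i
      map_add' := i.map_add
      map_smul' := by
        intro q s
        induction q using Quotient.ind with
        | _ a => exact i.map_smul a s }
  obtain ⟨h, hh⟩ := hSinjQ.out i' (fun s s' hss => hiinj hss) LinearMap.id
  let K : Submodule Rᵐᵒᵖ ↥E :=
    { carrier := {x | h x = 0}
      add_mem' := fun {x y} hx hy => by
        show h (x + y) = 0
        rw [map_add, hx, hy, add_zero]
      zero_mem' := map_zero h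
      smul_mem' := fun a x hx => by
        show h (a • x) = 0
        have h1 : h ((P.ringCon.mk' a) • x) = (P.ringCon.mk' a) • h x := map_smul h _ x
        have h2 : h x = 0 := hx
        calc h (a • x) = h ((P.ringCon.mk' a) • x) := rfl
          _ = (P.ringCon.mk' a) • h x := h1
          _ = 0 := by rw [h2, smul_zero] }
  have hK : K = ⊥ := by
    by_contra hne
    obtain ⟨x, hxm, hx0⟩ := (Submodule.ne_bot_iff _).mp (hhull.2.2 K hne)
    rw [Submodule.mem_inf] at hxm
    obtain ⟨⟨s, rfl⟩, hxK⟩ := hxm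
    have hs0 : s = 0 := by
      have h1 : h (i' s) = s := hh s
      have h2 : h (i s) = 0 := hxK
      rw [show h (i s) = h (i' s) from rfl, h1] at h2
      exact h2
    rw [hs0, map_zero] at hx0
    exact hx0 rfl
  have hhinj : Function.Injective h := by
    intro x y hxy
    have hmem : x - y ∈ K := by
      show h (x - y) = 0
      rw [map_sub, hxy, sub_self]
    rw [hK] at hmem
    simpa [sub_eq_zero] using hmem
  have hsurj : Function.Surjective i := by
    intro x
    refine ⟨h x, hhinj ?_⟩
    exact hh (h x)
  let e := LinearEquiv.ofBijective i ⟨hiinj, hsurj⟩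
  constructor
  intro X Y _ _ _ _ f hf g
  obtain ⟨h2, hh2⟩ := hEinj.out f hf ((e : S →ₗ[Rᵐᵒᵖ] ↥E) ∘ₗ g)
  refine ⟨(e.symm : ↥E →ₗ[Rᵐᵒᵖ] S) ∘ₗ h2, fun x => ?_⟩
  have := hh2 x
  simp only [LinearMap.comp_apply] at this ⊢
  rw [this, LinearEquiv.coe_coe, LinearEquiv.coe_coe, LinearEquiv.symm_apply_apply]
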